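/- Let P be a poset with least element 0 and let Z ⊆ P be P-modular and P-central. If I ⊆ P is Z-complete, then for every p ∈ I and z ∈ Z the infimum p∧z exists in P and lies in I. -/
import Mathlib


/-- `S` is `Z`-disjoint: there is `f : S → Z` with `p ≤ f p` and `f p ∧ f q = 0`
for distinct `p, q ∈ S`. -/
def ZDisjoint {β : Type*} [PartialOrder β] [OrderBot β] (Z S : Set β) : Prop :=
  ∃ f : β → β, (∀ p ∈ S, f p ∈ Z ∧ p ≤ f p) ∧
    ∀ p ∈ S, ∀ q ∈ S, p ≠ q → Disjoint (f p) (f q)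

/-- `I` is `Z`-complete: every `Z`-disjoint `S ⊆ I` has a supremum lying in `I`, and
whenever `{p, q}` is `Z`-disjoint with supremum in `I`, both `p` and `q` lie in `I`. -/
def ZComplete {β : Type*} [PartialOrder β] [OrderBot β] (Z I : Set β) : Prop :=
  (∀ S ⊆ I, ZDisjoint Z S → ∃ s, IsLUB S s ∧ s ∈ I) ∧
  (∀ p q s, ZDisjoint Z {p, q} → IsLUB {p, q} s → s ∈ I → p ∈ I ∧ q ∈ I)

/-- `Z` is `S`-central: for every `p ∈ S` and `y ∈ Z` there is `z ∈ Z` with `y ∧ z = 0`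
and `p` the supremum of some `q ≤ y` and `r ≤ z`. -/
def SCentral {β : Type*} [PartialOrder β] [OrderBot β] (Z S : Set β) : Prop :=
  ∀ p ∈ S, ∀ y ∈ Z, ∃ z ∈ Z, Disjoint y z ∧ ∃ q r, q ≤ y ∧ r ≤ z ∧ IsLUB {q, r} p
/-- `Z` is `P`-modular: disjoint pairs in `Z` are modular pairs. -/
def PModular {β : Type*} [PartialOrder β] [OrderBot β] (Z : Set β) : Prop :=
  ∀ y ∈ Z, ∀ z ∈ Z, Disjoint y z →
    ∀ p q s, p ≤ y → q ≤ z → IsLUB {p, q} s → IsGLB {z, s} q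

/-- If `Z` is `P`-modular and `P`-central and `I` is `Z`-complete, then for every
`p ∈ I` and `z ∈ Z` the infimum `p ∧ z` exists in `P` and lies in `I`. -/
theorem stmt5 {α : Type*} [PartialOrder α] [OrderBot α] (Z I : Set α)
    (hmod : PModular Z) (hcen : SCentral Z Set.univ) (hI : ZComplete Z I) :
    ∀ p ∈ I, ∀ z ∈ Z, ∃ w, IsGLB {p, z} w ∧ w ∈ I := by
  classical
  intro p hp z hz
  obtain ⟨z', hz', hdisj, q, r, hqz, hrz', hlub⟩ := hcen p (Set.mem_univ p) z hz
  have hglb : IsGLB {z, p} q := by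
    have := hmod z' hz' z hz hdisj.symm r q p hrz' hqz
    rw [Set.pair_comm r q] at this
    exact this hlub
  have hqI : q ∈ I := by
    have hzd : ZDisjoint Z {q, r} := by
      refine ⟨fun x => if x = q then z else z', ?_, ?_⟩
      · rintro x (rfl | rfl)
        · simp [hz, hqz]
        · by_cases h : x = q
          · subst h; simp [hz, hqz]
          · simp [h, hz', hrz']
      · rintro x (rfl | rfl) y (rfl | rfl) hne
        · exact absurd rfl hne
        · have : y ≠ x := fun h => hne h.symm
          simp [this, hdisj]
        · have : x ≠ y := hne
          simp [this, hdisj.symm]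
        · exact absurd rfl hne
    exact (hI.2 q r p hzd hlub hp).1
  exact ⟨q, by rwa [Set.pair_comm], hqI⟩
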